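/- arXiv:1401.0892 — 5 statements merged into one kernel-verified Lean document; each statement's English description precedes it below -/
import Mathlib

section
/- Let P and Q be probability mass functions on a finite alphabet X with full support, and P ≠ Q. For α ∈ [0,1] define Q_α = (1-α)P + αQ. Then for any 0 < α₁ < α₂ ≤ 1, the Kullback–Leibler divergence satisfies D(Q_{α₁} ‖ P) < D(Q_{α₂} ‖ P); that is, α ↦ D(Q_α ‖ P) is strictly increasing on (0,1]. -/
open Finset

lemma gibbs_nonneg {X : Type*} [Fintype X] (P R : X → ℝ)
    (hP : ∀ x, 0 < P x) (hR : ∀ x, 0 < R x)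
    (hPsum : ∑ x, P x = 1) (hRsum : ∑ x, R x = 1) :
    0 ≤ ∑ x, R x * Real.log (R x / P x) := by
  have key : ∀ x, R x - P x ≤ R x * Real.log (R x / P x) := by
    intro x
    have h1 : Real.log (P x / R x) ≤ P x / R x - 1 :=
      Real.log_le_sub_one_of_pos (div_pos (hP x) (hR x))
    have h2 : Real.log (R x / P x) = - Real.log (P x / R x) := by
      rw [← Real.log_inv, inv_div]
    nlinarith [hR x, hP x, mul_pos (hR x) (hP x),
      mul_le_mul_of_nonneg_left h1 (hR x).le,
      mul_div_cancel₀ (P x) (hR x).ne']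
  calc (0:ℝ) = ∑ x, (R x - P x) := by rw [Finset.sum_sub_distrib, hPsum, hRsum]; ring
    _ ≤ _ := Finset.sum_le_sum fun x _ => key x

lemma phi_convex (p : ℝ) (hp : 0 < p) (t y₁ y₂ : ℝ) (hy₁ : 0 < y₁) (hy₂ : 0 < y₂)
    (ht0 : 0 < t) (ht1 : t < 1) :
    ((1 - t) * y₁ + t * y₂) * Real.log (((1 - t) * y₁ + t * y₂) / p)
      ≤ (1 - t) * (y₁ * Real.log (y₁ / p)) + t * (y₂ * Real.log (y₂ / p)) := by
  have hy : 0 < (1 - t) * y₁ + t * y₂ := by nlinarith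
  have hlog : ∀ y : ℝ, 0 < y → Real.log (y / p) = Real.log y - Real.log p :=
    fun y hy => Real.log_div hy.ne' hp.ne'
  rw [hlog _ hy, hlog _ hy₁, hlog _ hy₂]
  have := Real.convexOn_mul_log.2 (Set.mem_Ici.mpr hy₁.le) (Set.mem_Ici.mpr hy₂.le)
    (by linarith : (0:ℝ) ≤ 1 - t) ht0.le (by ring)
  simp only [smul_eq_mul] at this
  nlinarith [this]

lemma phi_strict (p : ℝ) (hp : 0 < p) (t y₁ y₂ : ℝ) (hy₁ : 0 < y₁) (hy₂ : 0 < y₂)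
    (ht0 : 0 < t) (ht1 : t < 1) (hne : y₁ ≠ y₂) :
    ((1 - t) * y₁ + t * y₂) * Real.log (((1 - t) * y₁ + t * y₂) / p)
      < (1 - t) * (y₁ * Real.log (y₁ / p)) + t * (y₂ * Real.log (y₂ / p)) := by
  have hy : 0 < (1 - t) * y₁ + t * y₂ := by nlinarith
  have hlog : ∀ y : ℝ, 0 < y → Real.log (y / p) = Real.log y - Real.log p :=
    fun y hy => Real.log_div hy.ne' hp.ne'
  rw [hlog _ hy, hlog _ hy₁, hlog _ hy₂]
  have := Real.strictConvexOn_mul_log.2 (Set.mem_Ici.mpr hy₁.le) (Set.mem_Ici.mpr hy₂.le)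
    hne (by linarith : (0:ℝ) < 1 - t) ht0 (by ring)
  simp only [smul_eq_mul] at this
  nlinarith [this]

/-- Strict monotonicity of KL divergence along the segment from `P` to `Q`:
for PMFs `P ≠ Q` with full support on a finite alphabet, `α ↦ D((1-α)P+αQ ‖ P)`
is strictly increasing on `(0,1]`. -/
theorem stmt_0 {X : Type*} [Fintype X] [Nonempty X]
    (P Q : X → ℝ) (hP : ∀ x, 0 < P x) (hQ : ∀ x, 0 < Q x)
    (hPsum : ∑ x, P x = 1) (hQsum : ∑ x, Q x = 1) (hPQ : P ≠ Q)
    (α₁ α₂ : ℝ) (h1 : 0 < α₁) (h12 : α₁ < α₂) (h2 : α₂ ≤ 1) :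
    ∑ x, ((1 - α₁) * P x + α₁ * Q x) *
        Real.log (((1 - α₁) * P x + α₁ * Q x) / P x)
      < ∑ x, ((1 - α₂) * P x + α₂ * Q x) *
        Real.log (((1 - α₂) * P x + α₂ * Q x) / P x) := by
  have hα₂ : 0 < α₂ := h1.trans h12
  set t : ℝ := α₁ / α₂ with htdef
  have ht0 : 0 < t := div_pos h1 hα₂
  have ht1 : t < 1 := (div_lt_one hα₂).mpr h12
  set q₂ : X → ℝ := fun x => (1 - α₂) * P x + α₂ * Q x with hq₂
  have hq₂pos : ∀ x, 0 < q₂ x := fun x => by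
    have := hP x; have := hQ x; simp only [hq₂]; nlinarith
  have hq₂sum : ∑ x, q₂ x = 1 := by
    simp only [hq₂]
    rw [Finset.sum_add_distrib, ← Finset.mul_sum, ← Finset.mul_sum, hPsum, hQsum]; ring
  -- q₁ = (1-t) P + t q₂
  have hcomb : ∀ x, (1 - α₁) * P x + α₁ * Q x = (1 - t) * P x + t * q₂ x := by
    intro x; simp only [hq₂, htdef]; field_simp; ring
  -- pointwise ineq
  have hle : ∀ x, ((1 - α₁) * P x + α₁ * Q x) *
      Real.log (((1 - α₁) * P x + α₁ * Q x) / P x) ≤ t * (q₂ x * Real.log (q₂ x / P x)) := by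
    intro x
    rw [hcomb x]
    have := phi_convex (P x) (hP x) t (P x) (q₂ x) (hP x) (hq₂pos x) ht0 ht1
    have h0 : P x * Real.log (P x / P x) = 0 := by
      rw [div_self (hP x).ne', Real.log_one, mul_zero]
    rw [h0, mul_zero, zero_add] at this
    exact this
  obtain ⟨x₀, hx₀⟩ : ∃ x, P x ≠ Q x := by
    by_contra h; push_neg at h; exact hPQ (funext h)
  have hlt : ((1 - α₁) * P x₀ + α₁ * Q x₀) *
      Real.log (((1 - α₁) * P x₀ + α₁ * Q x₀) / P x₀)
        < t * (q₂ x₀ * Real.log (q₂ x₀ / P x₀)) := by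
    rw [hcomb x₀]
    have hne : P x₀ ≠ q₂ x₀ := by
      simp only [hq₂]; intro h; apply hx₀
      have h' : α₂ * (Q x₀ - P x₀) = 0 := by linarith
      rcases mul_eq_zero.mp h' with h'' | h''
      · exact absurd h'' hα₂.ne'
      · linarith
    have := phi_strict (P x₀) (hP x₀) t (P x₀) (q₂ x₀) (hP x₀) (hq₂pos x₀) ht0 ht1 hne
    have h0 : P x₀ * Real.log (P x₀ / P x₀) = 0 := by
      rw [div_self (hP x₀).ne', Real.log_one, mul_zero]
    rw [h0, mul_zero, zero_add] at this
    exact this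
  have step1 : ∑ x, ((1 - α₁) * P x + α₁ * Q x) *
      Real.log (((1 - α₁) * P x + α₁ * Q x) / P x)
        < ∑ x, t * (q₂ x * Real.log (q₂ x / P x)) :=
    Finset.sum_lt_sum (fun x _ => hle x) ⟨x₀, Finset.mem_univ x₀, hlt⟩
  have hgibbs := gibbs_nonneg P q₂ hP hq₂pos hPsum hq₂sum
  calc _ < ∑ x, t * (q₂ x * Real.log (q₂ x / P x)) := step1
    _ = t * ∑ x, q₂ x * Real.log (q₂ x / P x) := (Finset.mul_sum _ _ _).symm
    _ ≤ ∑ x, q₂ x * Real.log (q₂ x / P x) := by nlinarith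
    _ = _ := rfl
end

section
/- Let A₁, …, A_K be pairwise independent events in a probability space. Then P(⋃_{k=1}^K A_k) ≥ (1/2)·min{1, ∑_{k=1}^K P(A_k)}. -/
open MeasureTheory ENNReal
open scoped NNReal

private lemma two_mul_le_one_add_sq' (a : ℝ≥0∞) : 2 * a ≤ 1 + a * a := by
  rcases eq_or_ne a ⊤ with rfl | ha
  · simp
  · lift a to ℝ≥0 using ha
    have h : (2 : ℝ≥0) * a ≤ 1 + a * a := by
      rw [← NNReal.coe_le_coe]
      push_cast
      nlinarith [sq_nonneg ((a : ℝ) - 1)]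
    exact_mod_cast h

/-- Tightness of the union bound: for pairwise independent events
`A₁, …, A_K`, `P(⋃ A_k) ≥ (1/2)·min{1, ∑ P(A_k)}`. -/
theorem stmt_1 {Ω : Type*} [MeasurableSpace Ω] (μ : Measure Ω)
    [IsProbabilityMeasure μ] (K : ℕ) (A : Fin K → Set Ω)
    (hA : ∀ k, MeasurableSet (A k))
    (hind : ∀ i j, i ≠ j → μ (A i ∩ A j) = μ (A i) * μ (A j)) :
    (1 / 2 : ℝ≥0∞) * min 1 (∑ k, μ (A k)) ≤ μ (⋃ k, A k) := by
  classical
  set S : ℝ≥0∞ := ∑ k, μ (A k) with hS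
  have hSne : S ≠ ⊤ := by
    refine (lt_of_le_of_lt (Finset.sum_le_sum fun k _ => prob_le_one) ?_).ne
    simp
  have h1S0 : (1 : ℝ≥0∞) + S ≠ 0 := by simp
  have h1Stop : (1 : ℝ≥0∞) + S ≠ ⊤ := by simp [hSne]
  set c : ℝ≥0∞ := (1 + S)⁻¹ with hc
  have hctop : c ≠ ⊤ := ENNReal.inv_ne_top.mpr h1S0
  set Y : Ω → ℝ≥0∞ := fun x => ∑ k, (A k).indicator (fun _ => c) x with hY
  have hYmeas : Measurable Y :=
    Finset.measurable_sum _ fun k _ => measurable_const.indicator (hA k)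
  -- pointwise inequality
  have hpt : ∀ x, 2 * Y x ≤ (⋃ k, A k).indicator (fun _ => (1 : ℝ≥0∞)) x + Y x * Y x := by
    intro x
    by_cases hx : x ∈ ⋃ k, A k
    · rw [Set.indicator_of_mem hx]
      exact two_mul_le_one_add_sq' (Y x)
    · have hYx : Y x = 0 := by
        refine Finset.sum_eq_zero fun k _ => ?_
        have : x ∉ A k := fun h => hx (Set.mem_iUnion.mpr ⟨k, h⟩)
        simp [Set.indicator_of_notMem this]
      simp [hYx]
  -- integral of Y
  have hIY : ∫⁻ x, Y x ∂μ = c * S := by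
    rw [hY]
    rw [lintegral_finset_sum _ fun k _ => measurable_const.indicator (hA k)]
    rw [hS, Finset.mul_sum]
    refine Finset.sum_congr rfl fun k _ => ?_
    rw [lintegral_indicator_const (hA k)]
  -- integral of Y^2
  have hIYY : ∫⁻ x, Y x * Y x ∂μ = ∑ i, ∑ j, c * c * μ (A i ∩ A j) := by
    have hptY : ∀ x, Y x * Y x =
        ∑ i, ∑ j, (A i ∩ A j).indicator (fun _ => c * c) x := by
      intro x
      rw [hY, Finset.sum_mul_sum]
      refine Finset.sum_congr rfl fun i _ => Finset.sum_congr rfl fun j _ => ?_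
      exact (Set.inter_indicator_mul (fun _ => c) (fun _ => c) x).symm
    simp only [hptY]
    rw [lintegral_finset_sum _ fun i _ =>
      Finset.measurable_sum _ fun j _ => measurable_const.indicator ((hA i).inter (hA j))]
    refine Finset.sum_congr rfl fun i _ => ?_
    rw [lintegral_finset_sum _ fun j _ => measurable_const.indicator ((hA i).inter (hA j))]
    refine Finset.sum_congr rfl fun j _ => ?_
    rw [lintegral_indicator_const ((hA i).inter (hA j))]
  -- bound on the double sum
  have hT : ∑ i, ∑ j, μ (A i ∩ A j) ≤ S + S * S := by
    have : ∑ i, ∑ j, μ (A i ∩ A j) ≤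
        ∑ i, ∑ j, ((if i = j then μ (A i) else 0) + μ (A i) * μ (A j)) := by
      refine Finset.sum_le_sum fun i _ => Finset.sum_le_sum fun j _ => ?_
      by_cases hij : i = j
      · subst hij
        simp only [if_pos rfl, Set.inter_self]
        exact le_add_right le_rfl
      · rw [hind i j hij, if_neg hij, zero_add]
    refine this.trans ?_
    rw [hS]
    apply le_of_eq
    rw [Finset.sum_mul]
    rw [← Finset.sum_add_distrib]
    refine Finset.sum_congr rfl fun i _ => ?_
    rw [Finset.sum_add_distrib]
    congr 1
    · simp
    · rw [Finset.mul_sum]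
  -- key inequality
  have key : 2 * c * S ≤ μ (⋃ k, A k) + c * c * (S + S * S) := by
    calc 2 * c * S = ∫⁻ x, 2 * Y x ∂μ := by
          rw [lintegral_const_mul 2 hYmeas, hIY, mul_assoc]
      _ ≤ ∫⁻ x, ((⋃ k, A k).indicator (fun _ => (1 : ℝ≥0∞)) x + Y x * Y x) ∂μ :=
          lintegral_mono hpt
      _ = μ (⋃ k, A k) + ∫⁻ x, Y x * Y x ∂μ := by
          rw [lintegral_add_left (measurable_const.indicator
            (MeasurableSet.iUnion fun k => hA k)),
            lintegral_indicator_const (MeasurableSet.iUnion fun k => hA k), one_mul]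
      _ ≤ μ (⋃ k, A k) + c * c * (S + S * S) := by
          gcongr
          rw [hIYY]
          calc ∑ i, ∑ j, c * c * μ (A i ∩ A j)
              = c * c * ∑ i, ∑ j, μ (A i ∩ A j) := by
                rw [Finset.mul_sum]
                exact Finset.sum_congr rfl fun i _ => by rw [Finset.mul_sum]
            _ ≤ c * c * (S + S * S) := by gcongr
  -- algebraic inequality : (1/2) * min 1 S + c*c*(S+S*S) ≤ 2*c*S
  have hXeq : c * c * (S + S * S) = S * c := by
    have h : S + S * S = S * (1 + S) := by ring
    rw [h]
    calc c * c * (S * (1 + S)) = (1 + S)⁻¹ * (1 + S) * (S * c) := by rw [hc]; ring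
      _ = S * c := by rw [ENNReal.inv_mul_cancel h1S0 h1Stop, one_mul]
  have halg : (1 / 2 : ℝ≥0∞) * min 1 S + c * c * (S + S * S) ≤ 2 * c * S := by
    rw [hXeq]
    have h2cS : 2 * c * S = S * c + S * c := by ring
    rw [h2cS]
    refine add_le_add ?_ le_rfl
    -- (1/2) * min 1 S ≤ S * c = S / (1+S)
    have hmin : min 1 S * (1 + S) ≤ 2 * S := by
      rcases min_cases (1 : ℝ≥0∞) S with ⟨hm, hle⟩ | ⟨hm, hle⟩
      · rw [hm, one_mul, two_mul]
        exact add_le_add hle le_rfl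
      · rw [hm]
        calc S * (1 + S) ≤ S * (1 + 1) := mul_le_mul_right (add_le_add le_rfl hle.le) S
          _ = 2 * S := by ring
    have h2 : (1 / 2 : ℝ≥0∞) * min 1 S * (1 + S) ≤ S := by
      calc (1 / 2 : ℝ≥0∞) * min 1 S * (1 + S) = 2⁻¹ * (min 1 S * (1 + S)) := by
            rw [one_div, mul_assoc]
        _ ≤ 2⁻¹ * (2 * S) := mul_le_mul_right hmin _
        _ = S := by
            rw [← mul_assoc, ENNReal.inv_mul_cancel (by norm_num) (by norm_num), one_mul]
    have h3 := mul_le_mul_left h2 c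
    have hcc : (1 + S) * c = 1 := by rw [hc]; exact ENNReal.mul_inv_cancel h1S0 h1Stop
    have h4 : (1 / 2 : ℝ≥0∞) * min 1 S = 1 / 2 * min 1 S * (1 + S) * c := by
      rw [mul_assoc, hcc, mul_one]
    rw [h4]
    exact h3
  -- conclude by cancellation
  have hXtop : c * c * (S + S * S) ≠ ⊤ := by
    rw [hXeq]
    exact ENNReal.mul_ne_top hSne hctop
  have := halg.trans key
  exact (ENNReal.add_le_add_iff_right hXtop).mp this
end

section
/- Let Q and Q̄ be two types in P_n(X) (empirical distributions of length-n sequences over finite alphabet X) with total-variation distance ‖Q − Q̄‖ = 2d*/n for an integer d* > 0. Then for every x ∈ T_n(Q) (the type class of Q), there exists z ∈ T_n(Q̄) with Hamming distance d_H(x, z) ≤ d*. -/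
open Finset

/-- Empirical distribution of a length-`n` vector over a finite alphabet. -/
noncomputable def emp {X : Type*} [Fintype X] [DecidableEq X] {n : ℕ}
    (x : Fin n → X) (a : X) : ℝ :=
  ((Finset.univ.filter fun i => x i = a).card : ℝ) / n

private lemma min_real (a b : ℝ) : min a b = (a + b - |a - b|)/2 := by
  rcases le_total a b with h | h <;>
    simp [abs_of_nonneg, abs_of_nonpos, sub_nonneg, sub_nonpos, h, min_eq_left,
      min_eq_right] <;> ring

/-- If `Q, Q̄ ∈ 𝒫_n(X)` are types with variation distance `2d*/n` (`d* > 0`),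
then every `x ∈ T_n(Q)` is within Hamming distance `d*` of some `z ∈ T_n(Q̄)`. -/
theorem stmt_6 {X : Type*} [Fintype X] [DecidableEq X] {n : ℕ} (hn : 0 < n)
    (Q Qb : X → ℝ) (d : ℕ) (hd : 0 < d)
    (hdist : ∑ a, |Q a - Qb a| = 2 * d / n)
    (hQbType : ∃ w : Fin n → X, ∀ a, emp w a = Qb a)
    (x : Fin n → X) (hx : ∀ a, emp x a = Q a) :
    ∃ z : Fin n → X, (∀ a, emp z a = Qb a) ∧ hammingDist x z ≤ d := by
  classical
  obtain ⟨w, hw⟩ := hQbType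
  set cx : X → ℕ := fun a => (univ.filter fun i => x i = a).card with hcx
  set cw : X → ℕ := fun a => (univ.filter fun i => w i = a).card with hcw
  have hnR : (n : ℝ) ≠ 0 := Nat.cast_ne_zero.2 hn.ne'
  have hQx : ∀ a, (cx a : ℝ) = Q a * n := by
    intro a; rw [← hx a]; unfold emp; field_simp; rfl
  have hQw : ∀ a, (cw a : ℝ) = Qb a * n := by
    intro a; rw [← hw a]; unfold emp; field_simp; rfl
  have hsum_cx : ∑ a, cx a = n := by
    have := Finset.card_eq_sum_card_fiberwise
      (f := x) (s := univ) (t := univ) (fun i _ => mem_univ _)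
    simpa [hcx] using this.symm
  have hsum_cw : ∑ a, cw a = n := by
    have := Finset.card_eq_sum_card_fiberwise
      (f := w) (s := univ) (t := univ) (fun i _ => mem_univ _)
    simpa [hcw] using this.symm
  have habs : ∑ a, |(cx a : ℝ) - cw a| = 2 * d := by
    have h1 : ∀ a, |(cx a : ℝ) - cw a| = |Q a - Qb a| * n := by
      intro a
      rw [hQx, hQw, ← sub_mul, abs_mul, abs_of_nonneg (by positivity : (0:ℝ) ≤ (n:ℝ))]
    rw [Finset.sum_congr rfl fun a _ => h1 a, ← Finset.sum_mul, hdist]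
    field_simp
  set m : X → ℕ := fun a => min (cx a) (cw a) with hm
  have hm_le_x : ∀ a, m a ≤ cx a := fun a => min_le_left _ _
  have hm_le_w : ∀ a, m a ≤ cw a := fun a => min_le_right _ _
  have hsum_m_real : (∑ a, (m a : ℝ)) = n - d := by
    have h1 : ∀ a, (m a : ℝ) = ((cx a : ℝ) + cw a - |(cx a : ℝ) - cw a|) / 2 := by
      intro a
      rw [hm]; push_cast [Nat.cast_min]
      exact min_real _ _
    rw [Finset.sum_congr rfl fun a _ => h1 a]
    rw [← Finset.sum_div, Finset.sum_sub_distrib, Finset.sum_add_distrib, habs]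
    have e1 : ∑ a, (cx a : ℝ) = n := by rw [← Nat.cast_sum, hsum_cx]
    have e2 : ∑ a, (cw a : ℝ) = n := by rw [← Nat.cast_sum, hsum_cw]
    rw [e1, e2]; ring
  have hd_le_n : d ≤ n := by
    have h0 : (0 : ℝ) ≤ ∑ a, (m a : ℝ) := Finset.sum_nonneg fun a _ => by positivity
    rw [hsum_m_real, sub_nonneg] at h0
    exact_mod_cast h0
  have hsum_m : ∑ a, m a = n - d := by
    have : ((∑ a, m a : ℕ) : ℝ) = ((n - d : ℕ) : ℝ) := by
      rw [Nat.cast_sum, Nat.cast_sub hd_le_n, hsum_m_real]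
    exact_mod_cast this
  -- choose subsets of the fibers of size `m a`
  choose T hT hTcard using fun a =>
    Finset.exists_subset_card_eq (s := univ.filter fun i => x i = a) (n := m a) (hm_le_x a)
  choose T' hT' hT'card using fun a =>
    Finset.exists_subset_card_eq (s := univ.filter fun i => w i = a) (n := m a) (hm_le_w a)
  set S : Finset (Fin n) := univ.biUnion T with hS
  set S' : Finset (Fin n) := univ.biUnion T' with hS'
  have hdisj : ∀ a ∈ (univ : Finset X), ∀ b ∈ (univ : Finset X), a ≠ b →
      Disjoint (T a) (T b) := by
    intro a _ b _ hab
    rw [Finset.disjoint_left]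
    intro i hia hib
    have h1 : x i = a := (mem_filter.1 (hT a hia)).2
    have h2 : x i = b := (mem_filter.1 (hT b hib)).2
    exact hab (h1 ▸ h2)
  have hdisj' : ∀ a ∈ (univ : Finset X), ∀ b ∈ (univ : Finset X), a ≠ b →
      Disjoint (T' a) (T' b) := by
    intro a _ b _ hab
    rw [Finset.disjoint_left]
    intro i hia hib
    have h1 : w i = a := (mem_filter.1 (hT' a hia)).2
    have h2 : w i = b := (mem_filter.1 (hT' b hib)).2
    exact hab (h1 ▸ h2)
  have hScard : S.card = n - d := by
    rw [hS, Finset.card_biUnion hdisj, Finset.sum_congr rfl fun a _ => hTcard a, hsum_m]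
  have hS'card : S'.card = n - d := by
    rw [hS', Finset.card_biUnion hdisj', Finset.sum_congr rfl fun a _ => hT'card a, hsum_m]
  have hCcard : Sᶜ.card = d := by
    rw [Finset.card_compl, hScard, Fintype.card_fin, Nat.sub_sub_self hd_le_n]
  have hC'card : S'ᶜ.card = d := by
    rw [Finset.card_compl, hS'card, Fintype.card_fin, Nat.sub_sub_self hd_le_n]
  -- the bijection between the complements
  let e : {i // i ∈ Sᶜ} ≃ {i // i ∈ S'ᶜ} :=
    Finset.equivOfCardEq (hCcard.trans hC'card.symm)
  set z : Fin n → X := fun i => if h : i ∈ Sᶜ then w (e ⟨i, h⟩ : Fin n) else x i with hz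
  have hz_of_mem : ∀ i (h : i ∈ Sᶜ), z i = w (e ⟨i, h⟩ : Fin n) := by
    intro i h; rw [hz]; simp [h]
  have hz_of_not : ∀ i, i ∉ Sᶜ → z i = x i := by
    intro i h; rw [hz]; simp [h]
  -- counts of z
  have hcz : ∀ a, (univ.filter fun i => z i = a).card = cw a := by
    intro a
    have hsplit : (univ.filter fun i => z i = a).card
        = (S.filter fun i => z i = a).card + (Sᶜ.filter fun i => z i = a).card := by
      rw [← Finset.card_union_of_disjoint
        (Finset.disjoint_filter_filter (disjoint_compl_right)),
        ← Finset.filter_union, Finset.union_compl]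
    have hpart1 : S.filter (fun i => z i = a) = T a := by
      ext i
      simp only [mem_filter, hS, mem_biUnion, mem_univ, true_and]
      constructor
      · rintro ⟨⟨b, hib⟩, hzi⟩
        have hins : i ∈ S := by rw [hS]; exact mem_biUnion.2 ⟨b, mem_univ _, hib⟩
        have : z i = x i := hz_of_not i (by simp [hins])
        have hxb : x i = b := (mem_filter.1 (hT b hib)).2
        have : b = a := by rw [← hxb, ← this, hzi]
        exact this ▸ hib
      · intro hia
        have hins : i ∈ S := by rw [hS]; exact mem_biUnion.2 ⟨a, mem_univ _, hia⟩
        have hzx : z i = x i := hz_of_not i (by simp [hins])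
        exact ⟨⟨a, hia⟩, by rw [hzx, (mem_filter.1 (hT a hia)).2]⟩
    have hpart2 : (Sᶜ.filter fun i => z i = a).card
        = (S'ᶜ.filter fun i => w i = a).card := by
      refine Finset.card_bij' (fun i hi => (e ⟨i, (mem_filter.1 hi).1⟩ : Fin n))
        (fun j hj => (e.symm ⟨j, (mem_filter.1 hj).1⟩ : Fin n)) ?_ ?_ ?_ ?_
      · intro i hi
        obtain ⟨hiC, hzi⟩ := mem_filter.1 hi
        refine mem_filter.2 ⟨(e ⟨i, hiC⟩).2, ?_⟩
        rw [← hz_of_mem i hiC, hzi]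
      · intro j hj
        obtain ⟨hjC, hwj⟩ := mem_filter.1 hj
        refine mem_filter.2 ⟨(e.symm ⟨j, hjC⟩).2, ?_⟩
        rw [hz_of_mem _ (e.symm ⟨j, hjC⟩).2]
        congr 1
        have : e ⟨(e.symm ⟨j, hjC⟩ : Fin n), (e.symm ⟨j, hjC⟩).2⟩ = ⟨j, hjC⟩ := by
          rw [show (⟨(e.symm ⟨j, hjC⟩ : Fin n), (e.symm ⟨j, hjC⟩).2⟩ :
            {i // i ∈ Sᶜ}) = e.symm ⟨j, hjC⟩ from rfl, Equiv.apply_symm_apply]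
        rw [this]
        exact hwj
      · intro i hi
        exact congrArg Subtype.val (e.symm_apply_apply ⟨i, (mem_filter.1 hi).1⟩)
      · intro j hj
        exact congrArg Subtype.val (e.apply_symm_apply ⟨j, (mem_filter.1 hj).1⟩)
    have hpart3 : (S'ᶜ.filter fun i => w i = a)
        = (univ.filter fun i => w i = a) \ T' a := by
      ext j
      simp only [mem_filter, Finset.mem_compl, mem_sdiff, mem_univ, true_and]
      constructor
      · rintro ⟨hjC, hwj⟩
        exact ⟨hwj, fun hjT => hjC (by rw [hS']; exact mem_biUnion.2 ⟨a, mem_univ _, hjT⟩)⟩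
      · rintro ⟨hwj, hjT⟩
        refine ⟨?_, hwj⟩
        intro hjS'
        obtain ⟨b, _, hjb⟩ := mem_biUnion.1 hjS'
        have : w j = b := (mem_filter.1 (hT' b hjb)).2
        exact hjT (by rwa [← this, hwj] at hjb)
    have hpart3' : (S'ᶜ.filter fun i => w i = a).card = cw a - m a := by
      rw [hpart3, Finset.card_sdiff_of_subset (hT' a), hT'card a, hcw]
    rw [hsplit, hpart1, hTcard a, hpart2, hpart3', Nat.add_sub_cancel' (hm_le_w a)]
  refine ⟨z, ?_, ?_⟩
  · intro a
    rw [← hw a]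
    unfold emp
    rw [hcz a, hcw]
  · have hsub : (univ.filter fun i => x i ≠ z i) ⊆ Sᶜ := by
      intro i hi
      by_contra hiC
      exact (mem_filter.1 hi).2 (hz_of_not i hiC).symm
    calc hammingDist x z = (univ.filter fun i => x i ≠ z i).card := rfl
      _ ≤ Sᶜ.card := Finset.card_le_card hsub
      _ = d := hCcard
end

section
/- The set of measures Q̃_Y on a finite alphabet Y satisfying Q̃_Y(y) ≥ 0 for all y and ∑_y Q̃_Y(y) ≤ 1 is convex, and moreover, for any fixed η ≥ 0, the image set { Q_X(x)·P_{Y|X}(y|x)^{η/(1+η)}·Q̃_Y(y)^{1/(1+η)} : Q̃_Y in this set } is also convex: if Q̃_{0,Y} and Q̃_{1,Y} are in the set and 0 ≤ α ≤ 1, then the pointwise combination ((1−α)Q̃_{0,Y}^{1/(1+η)} + α·Q̃_{1,Y}^{1/(1+η)})^{1+η} is again in the set (i.e., nonnegative with sum at most 1). -/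
open Finset

/-- The subprobability simplex on a finite alphabet is convex, and for any
`η ≥ 0` it is closed under the "geometric-mean" combination
`((1−α)·a^{1/(1+η)} + α·b^{1/(1+η)})^{1+η}`: the result is nonnegative with
sum at most 1. -/
theorem stmt_12 {Y : Type*} [Fintype Y] (η : ℝ) (hη : 0 ≤ η) :
    Convex ℝ {Q : Y → ℝ | (∀ y, 0 ≤ Q y) ∧ ∑ y, Q y ≤ 1} ∧
    ∀ a b : Y → ℝ, (∀ y, 0 ≤ a y) → ∑ y, a y ≤ 1 →
      (∀ y, 0 ≤ b y) → ∑ y, b y ≤ 1 →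
      ∀ α : ℝ, 0 ≤ α → α ≤ 1 →
        (∀ y, 0 ≤ ((1 - α) * a y ^ (1 / (1 + η))
            + α * b y ^ (1 / (1 + η))) ^ (1 + η)) ∧
        ∑ y, ((1 - α) * a y ^ (1 / (1 + η))
            + α * b y ^ (1 / (1 + η))) ^ (1 + η) ≤ 1 := by
  have hp1 : (1:ℝ) ≤ 1 + η := by linarith
  have hp0 : (0:ℝ) < 1 + η := by linarith
  constructor
  · intro x hx y hy s t hs ht hst
    refine ⟨fun z => add_nonneg (mul_nonneg hs (hx.1 z)) (mul_nonneg ht (hy.1 z)), ?_⟩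
    simp only [Pi.add_apply, Pi.smul_apply, smul_eq_mul, Finset.sum_add_distrib,
      ← Finset.mul_sum]
    calc s * ∑ z, x z + t * ∑ z, y z ≤ s * 1 + t * 1 := by
          gcongr; exacts [hx.2, hy.2]
      _ = 1 := by linarith
  · intro a b ha hsa hb hsb α h0 h1
    have hterm : ∀ y, 0 ≤ (1 - α) * a y ^ (1 / (1 + η)) + α * b y ^ (1 / (1 + η)) :=
      fun y => add_nonneg (mul_nonneg (by linarith) (Real.rpow_nonneg (ha y) _))
        (mul_nonneg h0 (Real.rpow_nonneg (hb y) _))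
    refine ⟨fun y => Real.rpow_nonneg (hterm y) _, ?_⟩
    have key := Real.Lp_add_le Finset.univ
      (fun y => (1 - α) * a y ^ (1 / (1 + η)))
      (fun y => α * b y ^ (1 / (1 + η))) hp1
    have habs : ∀ y : Y, |(1 - α) * a y ^ (1 / (1 + η)) + α * b y ^ (1 / (1 + η))|
        = (1 - α) * a y ^ (1 / (1 + η)) + α * b y ^ (1 / (1 + η)) :=
      fun y => abs_of_nonneg (hterm y)
    have hA : ∑ y, |(1 - α) * a y ^ (1 / (1 + η))| ^ (1 + η) = (1 - α) ^ (1 + η) * ∑ y, a y := by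
      rw [Finset.mul_sum]
      refine Finset.sum_congr rfl fun y _ => ?_
      rw [abs_of_nonneg (mul_nonneg (by linarith) (Real.rpow_nonneg (ha y) _)),
        Real.mul_rpow (by linarith) (Real.rpow_nonneg (ha y) _),
        ← Real.rpow_mul (ha y), one_div_mul_cancel hp0.ne', Real.rpow_one]
    have hB : ∑ y, |α * b y ^ (1 / (1 + η))| ^ (1 + η) = α ^ (1 + η) * ∑ y, b y := by
      rw [Finset.mul_sum]
      refine Finset.sum_congr rfl fun y _ => ?_
      rw [abs_of_nonneg (mul_nonneg h0 (Real.rpow_nonneg (hb y) _)),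
        Real.mul_rpow h0 (Real.rpow_nonneg (hb y) _),
        ← Real.rpow_mul (hb y), one_div_mul_cancel hp0.ne', Real.rpow_one]
    rw [hA, hB] at key
    have hAle : ((1 - α) ^ (1 + η) * ∑ y, a y) ^ (1 / (1 + η)) ≤ 1 - α := by
      calc ((1 - α) ^ (1 + η) * ∑ y, a y) ^ (1 / (1 + η))
          ≤ ((1 - α) ^ (1 + η) * 1) ^ (1 / (1 + η)) := by
            apply Real.rpow_le_rpow (mul_nonneg (Real.rpow_nonneg (by linarith) _)
              (Finset.sum_nonneg fun y _ => ha y)) _ (by positivity)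
            exact mul_le_mul_of_nonneg_left hsa (Real.rpow_nonneg (by linarith) _)
        _ = 1 - α := by
            rw [mul_one, ← Real.rpow_mul (by linarith : (0:ℝ) ≤ 1 - α),
              mul_one_div_cancel hp0.ne', Real.rpow_one]
    have hBle : (α ^ (1 + η) * ∑ y, b y) ^ (1 / (1 + η)) ≤ α := by
      calc (α ^ (1 + η) * ∑ y, b y) ^ (1 / (1 + η))
          ≤ (α ^ (1 + η) * 1) ^ (1 / (1 + η)) := by
            apply Real.rpow_le_rpow (mul_nonneg (Real.rpow_nonneg h0 _)
              (Finset.sum_nonneg fun y _ => hb y)) _ (by positivity)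
            exact mul_le_mul_of_nonneg_left hsb (Real.rpow_nonneg h0 _)
        _ = α := by
            rw [mul_one, ← Real.rpow_mul h0, mul_one_div_cancel hp0.ne', Real.rpow_one]
    have hsum : (∑ y, |(1 - α) * a y ^ (1 / (1 + η)) + α * b y ^ (1 / (1 + η))| ^ (1 + η))
        ^ (1 / (1 + η)) ≤ 1 := by
      calc _ ≤ _ := key
        _ ≤ (1 - α) + α := add_le_add hAle hBle
        _ = 1 := by ring
    have hnn : 0 ≤ ∑ y, |(1 - α) * a y ^ (1 / (1 + η)) + α * b y ^ (1 / (1 + η))| ^ (1 + η) :=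
      Finset.sum_nonneg fun y _ => Real.rpow_nonneg (abs_nonneg _) _
    calc ∑ y, ((1 - α) * a y ^ (1 / (1 + η)) + α * b y ^ (1 / (1 + η))) ^ (1 + η)
          = ∑ y, |(1 - α) * a y ^ (1 / (1 + η)) + α * b y ^ (1 / (1 + η))| ^ (1 + η) := by
            refine Finset.sum_congr rfl fun y _ => by rw [habs y]
        _ = ((∑ y, |(1 - α) * a y ^ (1 / (1 + η)) + α * b y ^ (1 / (1 + η))| ^ (1 + η))
              ^ (1 / (1 + η))) ^ (1 + η) := by
            rw [← Real.rpow_mul hnn, one_div_mul_cancel hp0.ne', Real.rpow_one]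
        _ ≤ 1 ^ (1 + η) := Real.rpow_le_rpow (Real.rpow_nonneg hnn _) hsum (by linarith)
        _ = 1 := Real.one_rpow _
end

section
/- Consider the type-dependent random binning ensemble with rate function ρ: each x ∈ X^n of type Q̂_x is assigned independently and uniformly to one of e^{nρ(Q̂_x)} bins. For a source pair (x, y) with joint type Q_{XY} (marginals Q_X, Q_Y, conditional Q_{X|Y}), the probability (over random binning) that some other sequence x̃ ≠ x in the same conditional type class T_n(Q_{X|Y}) given y falls into the same bin as x satisfies: this probability is lower bounded by (1/2)·min{1, e^{−nρ(Q_X)}·(|T_n(Q_{X|Y})| − 1)} and hence is, up to subexponential factors, at least exp(−n·[ρ(Q_X) − H(Q_{X|Y}|Q_Y)]₊), where [t]₊ = max{t,0}. -/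
open MeasureTheory Finset ENNReal

/-- Chung–Erdős / second-moment lower bound for a union of pairwise
independent events of equal probability. -/
lemma chung_erdos_aux {Ω ι : Type*} [MeasurableSpace Ω] [DecidableEq ι]
    (μ : Measure Ω) [IsProbabilityMeasure μ]
    (s : Finset ι) (A : ι → Set Ω) (hA : ∀ i, MeasurableSet (A i)) (p : ℝ) (hp : 0 < p)
    (hprob : ∀ i ∈ s, μ (A i) = ENNReal.ofReal p)
    (hpair : ∀ i ∈ s, ∀ j ∈ s, i ≠ j → μ (A i ∩ A j) = μ (A i) * μ (A j))
    (hs : s.Nonempty) :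
    ENNReal.ofReal ((1 / 2) * min 1 (p * s.card)) ≤ μ (⋃ i ∈ s, A i) := by
  classical
  set U : Set Ω := ⋃ i ∈ s, A i with hUdef
  have hU : MeasurableSet U := MeasurableSet.biUnion s.countable_toSet (fun i _ => hA i)
  set f : Ω → ℝ≥0∞ := fun ω => ∑ i ∈ s, (A i).indicator 1 ω with hfdef
  set g : Ω → ℝ≥0∞ := U.indicator 1 with hgdef
  have hfmeas : Measurable f := by
    apply Finset.measurable_sum
    exact fun i _ => measurable_const.indicator (hA i)
  have hgmeas : Measurable g := measurable_const.indicator hU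
  set S : ℝ := p * s.card with hSdef
  have hScard : (0:ℝ) < (s.card : ℝ) := by
    exact_mod_cast Finset.card_pos.mpr hs
  have hSpos : 0 < S := mul_pos hp hScard
  have hS1 : ENNReal.ofReal S = ENNReal.ofReal p * (s.card : ℝ≥0∞) := by
    rw [hSdef, ENNReal.ofReal_mul hp.le, ENNReal.ofReal_natCast]
  have hS2 : ENNReal.ofReal (S ^ 2) = ENNReal.ofReal p ^ 2 * (s.card : ℝ≥0∞) ^ 2 := by
    rw [hSdef, mul_pow, ENNReal.ofReal_mul (by positivity), ← ENNReal.ofReal_pow hp.le,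
      ENNReal.ofReal_pow hScard.le, ENNReal.ofReal_natCast]
  -- first moment
  have h1 : ∫⁻ ω, f ω ∂μ = ENNReal.ofReal S := by
    simp only [hfdef]
    rw [lintegral_finset_sum s (f := fun i => (A i).indicator (1 : Ω → ℝ≥0∞))
      (fun i _ => measurable_const.indicator (hA i))]
    have : ∀ i ∈ s, ∫⁻ ω, (A i).indicator 1 ω ∂μ = ENNReal.ofReal p := by
      intro i hi
      rw [lintegral_indicator_one (hA i), hprob i hi]
    rw [Finset.sum_congr rfl this, Finset.sum_const, nsmul_eq_mul, hS1, mul_comm]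
  -- second moment bound
  have h2 : ∫⁻ ω, f ω ^ (2:ℝ) ∂μ ≤ ENNReal.ofReal (S + S ^ 2) := by
    have hsq : ∀ ω, f ω ^ (2:ℝ) = ∑ i ∈ s, ∑ j ∈ s, (A i ∩ A j).indicator 1 ω := by
      intro ω
      rw [show (2:ℝ) = ((2:ℕ):ℝ) by norm_num, ENNReal.rpow_natCast, sq, hfdef]
      rw [Finset.sum_mul_sum]
      refine Finset.sum_congr rfl fun i _ => Finset.sum_congr rfl fun j _ => ?_
      rw [Set.inter_indicator_one, Pi.mul_apply]
    calc ∫⁻ ω, f ω ^ (2:ℝ) ∂μ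
        = ∑ i ∈ s, ∑ j ∈ s, μ (A i ∩ A j) := by
          simp_rw [hsq]
          rw [lintegral_finset_sum s
            (f := fun i ω => ∑ j ∈ s, (A i ∩ A j).indicator (1 : Ω → ℝ≥0∞) ω)
            (fun i _ => Finset.measurable_sum _ (fun j _ =>
              measurable_const.indicator ((hA i).inter (hA j))))]
          refine Finset.sum_congr rfl fun i _ => ?_
          rw [lintegral_finset_sum s (f := fun j => (A i ∩ A j).indicator (1 : Ω → ℝ≥0∞))
            (fun j _ => measurable_const.indicator ((hA i).inter (hA j)))]
          exact Finset.sum_congr rfl fun j _ =>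
            lintegral_indicator_one ((hA i).inter (hA j))
      _ ≤ ∑ _i ∈ s, (ENNReal.ofReal p + (s.card : ℝ≥0∞) * ENNReal.ofReal p ^ 2) := by
          refine Finset.sum_le_sum fun i hi => ?_
          rw [← Finset.add_sum_erase s _ hi]
          gcongr
          · rw [Set.inter_self, hprob i hi]
          · calc ∑ j ∈ s.erase i, μ (A i ∩ A j)
                ≤ ∑ _j ∈ s.erase i, ENNReal.ofReal p ^ 2 := by
                  refine Finset.sum_le_sum fun j hj => ?_
                  have hji : j ≠ i := Finset.ne_of_mem_erase hj
                  rw [hpair i hi j (Finset.mem_of_mem_erase hj) (Ne.symm hji),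
                    hprob i hi, hprob j (Finset.mem_of_mem_erase hj), sq]
              _ ≤ (s.card : ℝ≥0∞) * ENNReal.ofReal p ^ 2 := by
                  rw [Finset.sum_const, nsmul_eq_mul]
                  gcongr
                  exact Finset.erase_subset _ _
      _ ≤ ENNReal.ofReal (S + S ^ 2) := by
          rw [Finset.sum_const, nsmul_eq_mul,
            ENNReal.ofReal_add hSpos.le (sq_nonneg S), hS1, hS2]
          exact le_of_eq (by ring)
  -- f vanishes off U, so f = f * g
  have hfg : f = fun ω => (f * g) ω := by
    funext ω
    by_cases hω : ω ∈ U
    · simp [hgdef, Set.indicator_of_mem hω]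
    · have : ∀ i ∈ s, ω ∉ A i := by
        intro i hi hmem
        exact hω (Set.mem_biUnion hi hmem)
      simp only [Pi.mul_apply, hfdef]
      rw [Finset.sum_eq_zero (fun i hi => Set.indicator_of_notMem (this i hi) _)]
      simp
  -- g ^ 2 = g and its integral
  have hg2 : ∀ ω, g ω ^ (2:ℝ) = g ω := by
    intro ω
    by_cases hω : ω ∈ U
    · simp [hgdef, Set.indicator_of_mem hω]
    · simp [hgdef, Set.indicator_of_notMem hω, ENNReal.zero_rpow_of_pos (by norm_num : (0:ℝ) < 2)]
  have hgint : ∫⁻ ω, g ω ^ (2:ℝ) ∂μ = μ U := by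
    simp_rw [hg2]
    exact lintegral_indicator_one hU
  -- Cauchy–Schwarz (Hölder with p = q = 2)
  have hconj : Real.HolderConjugate 2 2 := .two_two
  have holder := ENNReal.lintegral_mul_le_Lp_mul_Lq μ hconj hfmeas.aemeasurable
    hgmeas.aemeasurable
  rw [← hfg, h1, hgint] at holder
  -- square both sides
  have hsq2 : ENNReal.ofReal S ^ (2:ℝ) ≤ ENNReal.ofReal (S + S ^ 2) * μ U := by
    have := ENNReal.rpow_le_rpow holder (by norm_num : (0:ℝ) ≤ 2)
    calc ENNReal.ofReal S ^ (2:ℝ)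
        ≤ ((∫⁻ ω, f ω ^ (2:ℝ) ∂μ) ^ (1/2:ℝ) * μ U ^ (1/2:ℝ)) ^ (2:ℝ) := this
      _ = (∫⁻ ω, f ω ^ (2:ℝ) ∂μ) * μ U := by
          rw [ENNReal.mul_rpow_of_nonneg _ _ (by norm_num : (0:ℝ) ≤ 2),
            ← ENNReal.rpow_mul, ← ENNReal.rpow_mul]
          norm_num
      _ ≤ ENNReal.ofReal (S + S ^ 2) * μ U := by gcongr
  -- pass to reals
  have hUfin : μ U ≠ ⊤ := (measure_lt_top μ U).ne
  have hreal : S ^ 2 ≤ (S + S ^ 2) * (μ U).toReal := by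
    have h := ENNReal.toReal_mono (by finiteness) hsq2
    rw [ENNReal.ofReal_rpow_of_pos hSpos, ENNReal.toReal_ofReal (Real.rpow_nonneg hSpos.le (2:ℝ)),
      ENNReal.toReal_mul, ENNReal.toReal_ofReal (add_nonneg hSpos.le (sq_nonneg S))] at h
    calc S ^ 2 = S ^ (2:ℝ) := by rw [← Real.rpow_natCast S 2]; norm_num
      _ ≤ _ := h
  set u : ℝ := (μ U).toReal with hudef
  have hu0 : 0 ≤ u := ENNReal.toReal_nonneg
  have hfinal : (1 / 2) * min 1 S ≤ u := by
    rcases le_total S 1 with hS | hS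
    · rw [min_eq_right hS]
      nlinarith [mul_nonneg hu0 (mul_nonneg hSpos.le (sub_nonneg.mpr hS))]
    · rw [min_eq_left hS]
      nlinarith [mul_nonneg hu0 (mul_nonneg hSpos.le (sub_nonneg.mpr hS))]
  exact ENNReal.ofReal_le_of_le_toReal hfinal

/-- Random-binning collision probability bound. `T` abstracts the conditional
type class `T_n(Q_{X|Y})` containing the source block `x`; `A x̃` is the event
that `x̃` is assigned to the same bin as `x`, which happens with probability
`e^{−nρ(Q_X)}`, and these events are pairwise independent for distinct
`x̃ ≠ x`. Then the probability that some `x̃ ≠ x` in `T` collides with `x` is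
at least `(1/2)·min{1, e^{−nρ}(|T|−1)}`, and — using the type-class size bound
`(n+1)^{−|X||Y|} e^{nH} ≤ |T|` (and `|T| ≥ 2`) — at least
`(1/4)(n+1)^{−|X||Y|}·exp(−n·[ρ−H]₊)`. -/
theorem stmt_19 {X Y : Type*} [Fintype X] [Fintype Y] [DecidableEq X]
    {Ω : Type*} [MeasurableSpace Ω] (μ : Measure Ω) [IsProbabilityMeasure μ]
    (n : ℕ) (hn : 0 < n) (ρ H : ℝ)
    (T : Finset (Fin n → X)) (x : Fin n → X) (hxT : x ∈ T)
    (A : (Fin n → X) → Set Ω) (hA : ∀ z, MeasurableSet (A z))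
    (hprob : ∀ z ∈ T.erase x, μ (A z) = ENNReal.ofReal (Real.exp (-(n : ℝ) * ρ)))
    (hpair : ∀ z ∈ T.erase x, ∀ z' ∈ T.erase x, z ≠ z' →
      μ (A z ∩ A z') = μ (A z) * μ (A z'))
    (hT : ((n : ℝ) + 1) ^ (-((Fintype.card X * Fintype.card Y : ℕ) : ℝ))
        * Real.exp ((n : ℝ) * H) ≤ (T.card : ℝ))
    (hT2 : 2 ≤ T.card) :
    ENNReal.ofReal ((1 / 2) * min 1
        (Real.exp (-(n : ℝ) * ρ) * ((T.card : ℝ) - 1)))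
      ≤ μ (⋃ z ∈ T.erase x, A z) ∧
    ENNReal.ofReal ((1 / 4)
        * ((n : ℝ) + 1) ^ (-((Fintype.card X * Fintype.card Y : ℕ) : ℝ))
        * Real.exp (-(n : ℝ) * max (ρ - H) 0))
      ≤ μ (⋃ z ∈ T.erase x, A z) := by
  classical
  set p : ℝ := Real.exp (-(n : ℝ) * ρ) with hpdef
  have hp : 0 < p := Real.exp_pos _
  have hcard : ((T.erase x).card : ℝ) = (T.card : ℝ) - 1 := by
    rw [Finset.card_erase_of_mem hxT]
    have : 1 ≤ T.card := le_trans (by norm_num) hT2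
    push_cast [Nat.cast_sub this]
    ring
  have hne : (T.erase x).Nonempty := by
    rw [← Finset.card_pos, Finset.card_erase_of_mem hxT]
    omega
  have hmain := chung_erdos_aux μ (T.erase x) A hA p hp hprob hpair hne
  rw [hcard] at hmain
  refine ⟨hmain, le_trans ?_ hmain⟩
  apply ENNReal.ofReal_le_ofReal
  -- real-number inequality
  set c : ℝ := -((Fintype.card X * Fintype.card Y : ℕ) : ℝ) with hcdef
  set a : ℝ := ((n : ℝ) + 1) ^ c with hadef
  have hbase : (1:ℝ) ≤ (n : ℝ) + 1 := le_add_of_nonneg_left (Nat.cast_nonneg n)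
  have ha0 : 0 < a := Real.rpow_pos_of_pos (by positivity) _
  have hc0 : c ≤ 0 := by
    rw [hcdef]
    exact neg_nonpos.mpr (Nat.cast_nonneg _)
  have ha1 : a ≤ 1 := Real.rpow_le_one_of_one_le_of_nonpos hbase hc0
  have hexp1 : Real.exp (-(n : ℝ) * max (ρ - H) 0) ≤ 1 := by
    rw [Real.exp_le_one_iff]
    have : (0:ℝ) ≤ (n:ℝ) * max (ρ - H) 0 := by positivity
    linarith
  have hmax : Real.exp (-(n : ℝ) * max (ρ - H) 0) ≤ Real.exp ((n:ℝ) * (H - ρ)) := by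
    apply Real.exp_le_exp.mpr
    have h1 : ρ - H ≤ max (ρ - H) 0 := le_max_left _ _
    have h2 : (0:ℝ) ≤ (n:ℝ) := Nat.cast_nonneg n
    nlinarith
  have hae : a * Real.exp (-(n : ℝ) * max (ρ - H) 0) ≤ 1 :=
    mul_le_one₀ ha1 (Real.exp_pos _).le hexp1
  have hb1 : (1/4) * a * Real.exp (-(n : ℝ) * max (ρ - H) 0) ≤ (1/2) * 1 := by
    nlinarith
  have hb2 : (1/4) * a * Real.exp (-(n : ℝ) * max (ρ - H) 0)
      ≤ (1/2) * (p * ((T.card : ℝ) - 1)) := by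
    have hhalf : a * Real.exp ((n:ℝ) * H) / 2 ≤ (T.card : ℝ) - 1 := by
      have h2c : (2:ℝ) ≤ (T.card : ℝ) := by exact_mod_cast hT2
      linarith [hT]
    calc (1/4) * a * Real.exp (-(n : ℝ) * max (ρ - H) 0)
        ≤ (1/4) * a * Real.exp ((n:ℝ) * (H - ρ)) := by
          apply mul_le_mul_of_nonneg_left hmax (by positivity)
      _ = (1/2) * (p * (a * Real.exp ((n:ℝ) * H) / 2)) := by
          have hpe : p * Real.exp ((n:ℝ) * H) = Real.exp ((n:ℝ) * (H - ρ)) := by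
            rw [hpdef, ← Real.exp_add]
            congr 1
            ring
          rw [← hpe]
          ring
      _ ≤ (1/2) * (p * ((T.card : ℝ) - 1)) := by
          apply mul_le_mul_of_nonneg_left (mul_le_mul_of_nonneg_left hhalf hp.le)
          norm_num
  rcases le_total 1 (p * ((T.card : ℝ) - 1)) with h | h
  · rw [min_eq_left h]; exact hb1
  · rw [min_eq_right h]; exact hb2
end
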